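/- Fix $0<\varepsilon<1$ and an integer $n\ge 1$, and let $\delta(n)$ satisfy the stated range. Define $u_{jn}(\varepsilon)=\max\{0,\,j/n-\sqrt{\tfrac{1}{2n}\log(58/\varepsilon)}\}$ for $1\le j<n^{1-\delta(n)}$ and $u_{jn}(\varepsilon)=1-e^{-\tilde\nu_{jn}}e^{\sqrt{2/\varepsilon}}$ for $n^{1-\delta(n)}\le j\le n$; similarly define $u^{jn}(\varepsilon)=(j-1)/n+\sqrt{\tfrac{1}{2n}\log(58/\varepsilon)}$ for $1\le j<n^{1-\delta(n)}$ and $u^{jn}(\varepsilon)=1-e^{-\tilde\nu_{jn}}e^{-\sqrt{2/\varepsilon}}$ for $n^{1-\delta(n)}\le j\le n$, where $\tilde\nu_{jn}=\sum_{i=1}^j 1/(n-i+1)$. Then for every $1\le j\le n$, $u_{jn}(\varepsilon)<\frac{j}{n+1}<u^{jn}(\varepsilon)$. -/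

import Mathlib

open Filter Real Set

/-- `ν̃_{jn} = ∑_{i=1}^j 1/(n-i+1)`, the expected `j`-th exponential order statistic. -/
noncomputable def nutilde (n j : ℕ) : ℝ :=
  ∑ i ∈ Finset.Icc 1 j, 1 / ((n : ℝ) - (i : ℝ) + 1)

/-- The lower simultaneous bound `u_{jn}(ε)`. -/
noncomputable def ulow (ε δ : ℝ) (n j : ℕ) : ℝ :=
  if (j : ℝ) < (n : ℝ) ^ ((1:ℝ) - δ) then
    max 0 ((j : ℝ) / n - Real.sqrt (Real.log (58 / ε) / (2 * n)))
  else 1 - Real.exp (-(nutilde n j)) * Real.exp (Real.sqrt (2 / ε))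

/-- The upper simultaneous bound `u^{jn}(ε)`. -/
noncomputable def uup (ε δ : ℝ) (n j : ℕ) : ℝ :=
  if (j : ℝ) < (n : ℝ) ^ ((1:ℝ) - δ) then
    ((j : ℝ) - 1) / n + Real.sqrt (Real.log (58 / ε) / (2 * n))
  else 1 - Real.exp (-(nutilde n j)) * Real.exp (-Real.sqrt (2 / ε))

lemma nutilde_succ (n j : ℕ) :
    nutilde n (j+1) = nutilde n j + 1 / ((n : ℝ) - ((j:ℝ)+1) + 1) := by
  unfold nutilde
  rw [Finset.sum_Icc_succ_top (by omega : 1 ≤ j + 1)]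
  push_cast
  ring

lemma nutilde_lower (n : ℕ) : ∀ j : ℕ, j ≤ n →
    Real.log ((n:ℝ)+1) - Real.log ((n:ℝ) - j + 1) ≤ nutilde n j := by
  intro j
  induction j with
  | zero => intro _; simp [nutilde]
  | succ j ih =>
    intro hj
    have ih' := ih (by omega)
    rw [nutilde_succ]
    have hm : (1:ℝ) ≤ (n:ℝ) - j := by
      have : ((j:ℝ) + 1) ≤ (n:ℝ) := by exact_mod_cast hj
      linarith
    have key : Real.log ((n:ℝ) - j + 1) - Real.log ((n:ℝ) - j) ≤ 1 / ((n:ℝ) - j) := by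
      have h1 : Real.log (((n:ℝ) - j + 1) / ((n:ℝ) - j)) ≤ ((n:ℝ) - j + 1) / ((n:ℝ) - j) - 1 :=
        Real.log_le_sub_one_of_pos (by positivity)
      rw [Real.log_div (by linarith) (by linarith)] at h1
      have h2 : ((n:ℝ) - j + 1) / ((n:ℝ) - j) - 1 = 1 / ((n:ℝ) - j) := by
        field_simp
        ring
      linarith
    push_cast
    have harr : (n:ℝ) - ((j:ℝ)+1) + 1 = (n:ℝ) - j := by ring
    rw [harr]
    linarith

lemma nutilde_upper (n : ℕ) : ∀ j : ℕ, 1 ≤ j → j ≤ n →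
    nutilde n j ≤ 1 / ((n:ℝ) - j + 1) + Real.log n - Real.log ((n:ℝ) - j + 1) := by
  intro j h1 h2
  induction j, h1 using Nat.le_induction with
  | base =>
    have e : (n:ℝ) - 1 + 1 = (n:ℝ) := by ring
    simp only [Nat.cast_one, e]
    simp [nutilde]
  | succ j hj ih =>
    have ih' := ih (by omega)
    rw [nutilde_succ]
    have hm : (1:ℝ) ≤ (n:ℝ) - j := by
      have : ((j:ℝ) + 1) ≤ (n:ℝ) := by exact_mod_cast h2
      linarith
    have key : 1 / ((n:ℝ) - j + 1) ≤ Real.log ((n:ℝ) - j + 1) - Real.log ((n:ℝ) - j) := by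
      have h1 : Real.log (((n:ℝ) - j) / ((n:ℝ) - j + 1)) ≤ ((n:ℝ) - j) / ((n:ℝ) - j + 1) - 1 :=
        Real.log_le_sub_one_of_pos (by positivity)
      rw [Real.log_div (by linarith) (by linarith)] at h1
      have h2' : ((n:ℝ) - j) / ((n:ℝ) - j + 1) - 1 = -(1 / ((n:ℝ) - j + 1)) := by
        field_simp
        ring
      linarith
    push_cast
    have harr : (n:ℝ) - ((j:ℝ)+1) + 1 = (n:ℝ) - j := by ring
    rw [harr]
    linarith

/-- The simultaneous bounds satisfy `u_{jn}(ε) < j/(n+1) < u^{jn}(ε)` for all `1 ≤ j ≤ n`. -/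
theorem ulow_lt_uup (ε : ℝ) (hε0 : 0 < ε) (hε1 : ε < 1) (n : ℕ) (hn : 1 ≤ n) (δ : ℝ)
    (hδ1 : 1 - Real.log ((n : ℝ) - Real.sqrt ((n : ℝ) / 2 * Real.log (58 / ε)) + 1) /
      Real.log n ≤ δ)
    (hδ2 : δ < 1 - Real.log ((n : ℝ) / 2 * Real.log (58 / ε)) / (2 * Real.log n)) :
    ∀ j : ℕ, 1 ≤ j → j ≤ n →
      ulow ε δ n j < (j : ℝ) / ((n : ℝ) + 1) ∧ (j : ℝ) / ((n : ℝ) + 1) < uup ε δ n j := by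
  intro j hj1 hjn
  have hn1 : (1:ℝ) ≤ (n:ℝ) := by exact_mod_cast hn
  have hj1' : (1:ℝ) ≤ (j:ℝ) := by exact_mod_cast hj1
  have hjn' : (j:ℝ) ≤ (n:ℝ) := by exact_mod_cast hjn
  have hn0 : (0:ℝ) < (n:ℝ) := by linarith
  by_cases h : (j : ℝ) < (n : ℝ) ^ ((1:ℝ) - δ)
  · rw [ulow, uup, if_pos h, if_pos h]
    -- log (58/ε) ≥ 2
    have h58 : (58:ℝ) ≤ 58/ε := by
      rw [le_div_iff₀ hε0]; nlinarith
    have hlog58 : (2:ℝ) ≤ Real.log 58 := by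
      rw [Real.le_log_iff_exp_le (by norm_num)]
      have h2 : Real.exp 2 = Real.exp 1 * Real.exp 1 := by rw [← Real.exp_add]; norm_num
      nlinarith [Real.exp_one_lt_d9, Real.exp_pos 1]
    have hlog : (2:ℝ) ≤ Real.log (58/ε) :=
      hlog58.trans (Real.log_le_log (by norm_num) h58)
    set s := Real.sqrt (Real.log (58/ε) / (2*(n:ℝ))) with hs_def
    have hsq : (Real.sqrt (n:ℝ))⁻¹ ≤ s := by
      have h1 : ((n:ℝ))⁻¹ ≤ Real.log (58/ε) / (2*(n:ℝ)) := by
        rw [inv_eq_one_div, div_le_div_iff₀ hn0 (by positivity)]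
        nlinarith
      calc (Real.sqrt (n:ℝ))⁻¹ = Real.sqrt ((n:ℝ)⁻¹) := (Real.sqrt_inv _).symm
        _ ≤ s := Real.sqrt_le_sqrt h1
    have hsn : Real.sqrt (n:ℝ) < (n:ℝ)+1 := by
      rw [show ((n:ℝ)+1) = Real.sqrt (((n:ℝ)+1)^2) by rw [Real.sqrt_sq (by linarith)]]
      apply Real.sqrt_lt_sqrt (by positivity)
      nlinarith
    have hsp : (0:ℝ) < Real.sqrt (n:ℝ) := Real.sqrt_pos.mpr hn0
    have hs : 1/((n:ℝ)+1) < s := by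
      have := one_div_lt_one_div_of_lt hsp hsn
      rw [one_div (Real.sqrt (n:ℝ))] at this
      linarith
    constructor
    · apply max_lt
      · positivity
      · have e : (j:ℝ)/(n:ℝ) - (j:ℝ)/((n:ℝ)+1) = (j:ℝ)/((n:ℝ)*((n:ℝ)+1)) := by
          field_simp; ring
        have c1 : (j:ℝ)/((n:ℝ)*((n:ℝ)+1)) ≤ (n:ℝ)/((n:ℝ)*((n:ℝ)+1)) := by gcongr
        have c2 : (n:ℝ)/((n:ℝ)*((n:ℝ)+1)) = 1/((n:ℝ)+1) := by
          field_simp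
        linarith
    · have e : (j:ℝ)/((n:ℝ)+1) - ((j:ℝ)-1)/(n:ℝ) = ((n:ℝ)+1-(j:ℝ))/((n:ℝ)*((n:ℝ)+1)) := by
        field_simp; ring
      have c1 : ((n:ℝ)+1-(j:ℝ))/((n:ℝ)*((n:ℝ)+1)) ≤ (n:ℝ)/((n:ℝ)*((n:ℝ)+1)) := by
        gcongr
        linarith
      have c2 : (n:ℝ)/((n:ℝ)*((n:ℝ)+1)) = 1/((n:ℝ)+1) := by
        field_simp
      linarith
  · rw [ulow, uup, if_neg h, if_neg h]
    have hm1 : (1:ℝ) ≤ (n:ℝ) - j + 1 := by linarith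
    have hm0 : (0:ℝ) < (n:ℝ) - j + 1 := by linarith
    have hL := nutilde_lower n j hjn
    have hU := nutilde_upper n j hj1 hjn
    have hc1 : (1:ℝ) < Real.sqrt (2/ε) := by
      have : (1:ℝ) < 2/ε := by
        rw [lt_div_iff₀ hε0]; linarith
      calc (1:ℝ) = Real.sqrt 1 := by simp
        _ < Real.sqrt (2/ε) := Real.sqrt_lt_sqrt (by norm_num) this
    have hfrac : (j:ℝ)/((n:ℝ)+1) = 1 - ((n:ℝ) - j + 1)/((n:ℝ)+1) := by
      field_simp
      ring
    have hmexp : ((n:ℝ) - j + 1)/((n:ℝ)+1)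
        = Real.exp (Real.log ((n:ℝ) - j + 1) - Real.log ((n:ℝ)+1)) := by
      rw [Real.exp_sub, Real.exp_log hm0, Real.exp_log (by linarith)]
    have h1m : 1/((n:ℝ) - j + 1) ≤ 1 := by
      rw [div_le_one hm0]; linarith
    have hlogn : Real.log (n:ℝ) ≤ Real.log ((n:ℝ)+1) :=
      Real.log_le_log hn0 (by linarith)
    constructor
    · rw [← Real.exp_add, hfrac]
      have hlt : Real.exp (Real.log ((n:ℝ) - j + 1) - Real.log ((n:ℝ)+1))
          < Real.exp (-(nutilde n j) + Real.sqrt (2/ε)) := by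
        apply Real.exp_lt_exp.mpr
        linarith
      rw [hmexp]
      linarith
    · rw [← Real.exp_add, hfrac]
      have hlt : Real.exp (-(nutilde n j) + -Real.sqrt (2/ε))
          < Real.exp (Real.log ((n:ℝ) - j + 1) - Real.log ((n:ℝ)+1)) := by
        apply Real.exp_lt_exp.mpr
        linarith
      rw [hmexp]
      linarith
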